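/- arXiv:1610.02978 — 5 statements merged into one kernel-verified Lean document; each statement's English description precedes it below -/
import Mathlib

section
/- Let $k \geq 2$ be an integer and let $d_1, \ldots, d_k$ be positive integers. For each non-empty subset $I \subseteq \{1, \ldots, k\}$ set $d_I = \sum_{i \in I} d_i$. Then, as integers, $$\sum_{\emptyset \neq I \subseteq \{1,\ldots,k\}} \left\lfloor \frac{d_I - 1}{2} \right\rfloor = 2^{k-2}(d_1 + \cdots + d_k - 4) + 1 + \delta_k,$$ where $\delta_k = 2^{k-2}$ if at least one of the $d_i$ is odd, and $\delta_k = 0$ if all of the $d_i$ are even. -/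
open Finset

lemma sumA' {ι : Type*} [DecidableEq ι] (s : Finset ι) (f : ι → ℤ) :
    2 * ∑ I ∈ s.powerset, ∑ i ∈ I, f i = 2 ^ s.card * ∑ i ∈ s, f i := by
  induction s using Finset.induction_on with
  | empty => simp
  | @insert a s ha ih =>
    have hdisj : Disjoint s.powerset (s.powerset.image (insert a)) := by
      rw [Finset.disjoint_right]
      intro I hI hI'
      simp only [Finset.mem_image] at hI
      obtain ⟨J, hJ, rfl⟩ := hI
      exact ha (Finset.mem_powerset.mp hI' (Finset.mem_insert_self a J))
    have hinj : ∀ I ∈ s.powerset, ∀ J ∈ s.powerset, insert a I = insert a J → I = J := by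
      intro I hI J hJ h
      have haI : a ∉ I := fun h' => ha (Finset.mem_powerset.mp hI h')
      have haJ : a ∉ J := fun h' => ha (Finset.mem_powerset.mp hJ h')
      rw [← Finset.erase_insert haI, ← Finset.erase_insert haJ, h]
    rw [Finset.powerset_insert, Finset.sum_union hdisj, Finset.sum_image hinj]
    have hins : ∀ I ∈ s.powerset, ∑ i ∈ insert a I, f i = f a + ∑ i ∈ I, f i := by
      intro I hI
      exact Finset.sum_insert (fun h' => ha (Finset.mem_powerset.mp hI h'))
    rw [Finset.sum_congr rfl hins, Finset.sum_add_distrib, Finset.sum_const,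
        Finset.card_powerset, Finset.card_insert_of_notMem ha,
        Finset.sum_insert ha, pow_succ]
    push_cast [nsmul_eq_mul]
    ring_nf
    ring_nf at ih
    linarith [ih]

lemma sumB' {ι : Type*} [DecidableEq ι] (s : Finset ι) (f : ι → ℤ) :
    2 * ∑ I ∈ s.powerset, (if Odd (∑ i ∈ I, f i) then (1:ℤ) else 0)
      = if ∃ i ∈ s, Odd (f i) then 2 ^ s.card else 0 := by
  induction s using Finset.induction_on with
  | empty =>
      simp only [Finset.powerset_empty, Finset.sum_singleton, Finset.sum_empty,
        Finset.card_empty, pow_zero]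
      simp [Int.not_odd_iff_even]
  | @insert a s ha ih =>
    have hdisj : Disjoint s.powerset (s.powerset.image (insert a)) := by
      rw [Finset.disjoint_right]
      intro I hI hI'
      simp only [Finset.mem_image] at hI
      obtain ⟨J, hJ, rfl⟩ := hI
      exact ha (Finset.mem_powerset.mp hI' (Finset.mem_insert_self a J))
    have hinj : ∀ I ∈ s.powerset, ∀ J ∈ s.powerset, insert a I = insert a J → I = J := by
      intro I hI J hJ h
      have haI : a ∉ I := fun h' => ha (Finset.mem_powerset.mp hI h')
      have haJ : a ∉ J := fun h' => ha (Finset.mem_powerset.mp hJ h')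
      rw [← Finset.erase_insert haI, ← Finset.erase_insert haJ, h]
    rw [Finset.powerset_insert, Finset.sum_union hdisj, Finset.sum_image hinj]
    have hins : ∀ I ∈ s.powerset,
        (if Odd (∑ i ∈ insert a I, f i) then (1:ℤ) else 0)
          = (if Odd (f a + ∑ i ∈ I, f i) then (1:ℤ) else 0) := by
      intro I hI
      rw [Finset.sum_insert (fun h' => ha (Finset.mem_powerset.mp hI h'))]
    rw [Finset.sum_congr rfl hins]
    rcases Int.even_or_odd (f a) with hev | hod
    · have heq : ∀ I ∈ s.powerset,
          (if Odd (f a + ∑ i ∈ I, f i) then (1:ℤ) else 0)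
            = (if Odd (∑ i ∈ I, f i) then (1:ℤ) else 0) := by
        intro I hI
        congr 1
        simp only [eq_iff_iff]
        obtain ⟨c, hc⟩ := hev
        constructor
        · rintro ⟨m, hm⟩; exact ⟨m - c, by omega⟩
        · rintro ⟨m, hm⟩; exact ⟨m + c, by omega⟩
      rw [Finset.sum_congr rfl heq]
      have hexiff : (∃ i ∈ insert a s, Odd (f i)) ↔ (∃ i ∈ s, Odd (f i)) := by
        constructor
        · rintro ⟨i, hi, hoi⟩
          rcases Finset.mem_insert.mp hi with rfl | hi'
          · exact absurd hoi (by simpa [Int.not_odd_iff_even] using hev)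
          · exact ⟨i, hi', hoi⟩
        · rintro ⟨i, hi, hoi⟩; exact ⟨i, Finset.mem_insert_of_mem hi, hoi⟩
      rw [Finset.card_insert_of_notMem ha, pow_succ]
      split_ifs with h
      · rw [if_pos (hexiff.mp h)] at ih; linarith
      · rw [if_neg (fun h' => h (hexiff.mpr h'))] at ih; linarith
    · have hpair : ∀ I ∈ s.powerset,
          (if Odd (∑ i ∈ I, f i) then (1:ℤ) else 0)
            + (if Odd (f a + ∑ i ∈ I, f i) then (1:ℤ) else 0) = 1 := by
        intro I hI
        rcases Int.even_or_odd (∑ i ∈ I, f i) with ⟨c, hc⟩ | ⟨c, hc⟩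
        · rw [if_neg (by simp [Int.not_odd_iff_even]; exact ⟨c, hc⟩),
              if_pos (by obtain ⟨m, hm⟩ := hod; exact ⟨m + c, by omega⟩)]
          ring
        · rw [if_pos ⟨c, hc⟩, if_neg]
          · ring
          · simp only [Int.not_odd_iff_even]
            obtain ⟨m, hm⟩ := hod; exact ⟨m + c + 1, by omega⟩
      have : ∑ I ∈ s.powerset, (if Odd (∑ i ∈ I, f i) then (1:ℤ) else 0)
            + ∑ I ∈ s.powerset, (if Odd (f a + ∑ i ∈ I, f i) then (1:ℤ) else 0)
          = 2 ^ s.card := by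
        rw [← Finset.sum_add_distrib, Finset.sum_congr rfl hpair, Finset.sum_const,
            Finset.card_powerset]
        simp
      rw [if_pos ⟨a, Finset.mem_insert_self a s, hod⟩, Finset.card_insert_of_notMem ha,
          pow_succ]
      linarith

/-- Genus identity: the sum over nonempty subsets `I ⊆ {1,...,k}` of
`⌊(d_I - 1)/2⌋`, where `d_I = ∑_{i ∈ I} d i`, equals
`2^(k-2) * (d₁ + ⋯ + d_k - 4) + 1 + δ`, where `δ = 2^(k-2)` if some `d i` is odd
and `δ = 0` if all `d i` are even. -/
theorem sum_genus_eq (k : ℕ) (hk : 2 ≤ k) (d : Fin k → ℕ) (hd : ∀ i, 0 < d i) :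
    ∑ I ∈ Finset.univ.powerset.filter (fun I : Finset (Fin k) => I.Nonempty),
        ((∑ i ∈ I, (d i : ℤ)) - 1) / 2
      = 2 ^ (k - 2) * ((∑ i, (d i : ℤ)) - 4) + 1
          + (if ∃ i, Odd (d i) then (2 : ℤ) ^ (k - 2) else 0) := by
  classical
  set t : Finset (Fin k) → ℤ := fun I => ((∑ i ∈ I, (d i : ℤ)) - 1) / 2 with ht
  have key : ∀ n : ℤ, 2 * ((n - 1) / 2) = n - 2 + (if Odd n then 1 else 0) := by
    intro n
    rcases Int.even_or_odd n with ⟨m, hm⟩ | h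
    · rw [if_neg (by simp [Int.not_odd_iff_even]; exact ⟨m, hm⟩)]; omega
    · rw [if_pos h]; obtain ⟨m, hm⟩ := h; omega
  have hfil : Finset.univ.powerset.filter (fun I : Finset (Fin k) => ¬ I.Nonempty) = {∅} := by
    ext I
    simp [Finset.not_nonempty_iff_eq_empty]
  have hsplit := Finset.sum_filter_add_sum_filter_not Finset.univ.powerset
      (fun I : Finset (Fin k) => I.Nonempty) t
  rw [hfil, Finset.sum_singleton] at hsplit
  have htempty : t ∅ = -1 := by simp [ht]
  rw [htempty] at hsplit
  -- total sum over all subsets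
  have hA := sumA' (Finset.univ : Finset (Fin k)) (fun i => (d i : ℤ))
  have hB := sumB' (Finset.univ : Finset (Fin k)) (fun i => (d i : ℤ))
  rw [Finset.card_univ, Fintype.card_fin] at hA hB
  have hEiff : (∃ i ∈ (Finset.univ : Finset (Fin k)), Odd ((d i : ℤ))) ↔ ∃ i, Odd (d i) := by
    simp [Int.odd_coe_nat]
  simp only [hEiff] at hB
  have h2t : ∀ I ∈ (Finset.univ : Finset (Fin k)).powerset,
      2 * t I = (∑ i ∈ I, (d i : ℤ)) - 2 + (if Odd (∑ i ∈ I, (d i : ℤ)) then 1 else 0) := by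
    intro I _
    exact key _
  have htot : 2 * (2 * ∑ I ∈ (Finset.univ : Finset (Fin k)).powerset, t I)
      = 2 ^ k * (∑ i, (d i : ℤ)) - 2 * (2 * 2 ^ k)
        + (if ∃ i, Odd (d i) then (2:ℤ) ^ k else 0) := by
    rw [← hA, ← hB, Finset.mul_sum, Finset.sum_congr rfl h2t, Finset.sum_add_distrib,
        Finset.sum_sub_distrib, Finset.sum_const, Finset.card_powerset, Finset.card_univ,
        Fintype.card_fin]
    push_cast [nsmul_eq_mul]
    ring
  obtain ⟨m, rfl⟩ : ∃ m, k = m + 2 := ⟨k - 2, by omega⟩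
  simp only [Nat.add_sub_cancel] at *
  have hpow : (2:ℤ) ^ (m + 2) = 4 * 2 ^ m := by ring
  rw [hpow] at htot
  set T := ∑ I ∈ (Finset.univ : Finset (Fin (m + 2))).powerset, t I
  set D := ∑ i, (d i : ℤ)
  set P := (2:ℤ) ^ m
  split_ifs at htot ⊢ with h
  · linarith [hsplit, htot]
  · linarith [hsplit, htot]
end

section
/- Let $\mathbb{F}_{37}$ be the field with $37$ elements, $f_1 = x^4 + x^3 + 35x^2 + 32x + 1$ and $f_2 = x^4 + 11x^3 + 29x^2 + 13x + 29$ in $\mathbb{F}_{37}[x]$. Then $\#\{(x, y_1, y_2) \in \mathbb{F}_{37}^3 : y_1^2 = f_1(x) \text{ and } y_2^2 = f_2(x)\} = 84$. -/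
/-- Affine point count of the fibre product curve `y₁² = f₁(x)`, `y₂² = f₂(x)`. -/
theorem affine_point_count_8 :
    Nat.card {p : (ZMod 37) × (ZMod 37) × (ZMod 37) |
      p.2.1 ^ 2 = p.1^4 + p.1^3 + 35*p.1^2 + 32*p.1 + 1 ∧
      p.2.2 ^ 2 = p.1^4 + 11*p.1^3 + 29*p.1^2 + 13*p.1 + 29} = 84 := by
  have e : {p : (ZMod 37) × (ZMod 37) × (ZMod 37) //
      p.2.1 ^ 2 = p.1^4 + p.1^3 + 35*p.1^2 + 32*p.1 + 1 ∧
      p.2.2 ^ 2 = p.1^4 + 11*p.1^3 + 29*p.1^2 + 13*p.1 + 29} ≃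
    (x : ZMod 37) × ({y : ZMod 37 // y ^ 2 = x^4 + x^3 + 35*x^2 + 32*x + 1} ×
      {y : ZMod 37 // y ^ 2 = x^4 + 11*x^3 + 29*x^2 + 13*x + 29}) :=
    { toFun := fun p => ⟨p.1.1, ⟨⟨p.1.2.1, p.2.1⟩, ⟨p.1.2.2, p.2.2⟩⟩⟩
      invFun := fun q => ⟨⟨q.1, q.2.1.1, q.2.2.1⟩, q.2.1.2, q.2.2.2⟩
      left_inv := fun p => rfl
      right_inv := fun q => rfl }
  refine (Nat.card_congr e).trans ?_
  rw [Nat.card_eq_fintype_card, Fintype.card_sigma]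
  simp only [Fintype.card_prod]
  decide
end

section
/- Let $\mathbb{F}_{47}$ be the field with $47$ elements, $f_1 = x^4 + 25x^3 + x^2 + 2x + 31$ and $f_2 = x^3 + x + 38$ in $\mathbb{F}_{47}[x]$. Then $\#\{(x, y_1, y_2) \in \mathbb{F}_{47}^3 : y_1^2 = f_1(x) \text{ and } y_2^2 = f_2(x)\} = 100$. -/
/-- Affine point count of the fibre product curve `y₁² = f₁(x)`, `y₂² = f₂(x)`. -/
theorem affine_point_count_11 :
    Nat.card {p : (ZMod 47) × (ZMod 47) × (ZMod 47) |
      p.2.1 ^ 2 = p.1^4 + 25*p.1^3 + p.1^2 + 2*p.1 + 31 ∧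
      p.2.2 ^ 2 = p.1^3 + p.1 + 38} = 100 := by
  have e : {p : (ZMod 47) × (ZMod 47) × (ZMod 47) |
      p.2.1 ^ 2 = p.1^4 + 25*p.1^3 + p.1^2 + 2*p.1 + 31 ∧
      p.2.2 ^ 2 = p.1^3 + p.1 + 38} ≃
      Σ x : ZMod 47, {y : ZMod 47 // y ^ 2 = x^4 + 25*x^3 + x^2 + 2*x + 31} ×
        {y : ZMod 47 // y ^ 2 = x^3 + x + 38} :=
    { toFun := fun p => ⟨p.1.1, ⟨p.1.2.1, p.2.1⟩, ⟨p.1.2.2, p.2.2⟩⟩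
      invFun := fun q => ⟨⟨q.1, q.2.1.1, q.2.2.1⟩, q.2.1.2, q.2.2.2⟩
      left_inv := fun _ => rfl
      right_inv := fun _ => rfl }
  rw [Nat.card_congr e, Nat.card_eq_fintype_card, Fintype.card_sigma]
  decide
end

section
/- Let $\mathbb{F}_{53}$ be the field with $53$ elements, $f_1 = x^4 + x^3 + 52x^2 + 47x + 1$ and $f_2 = x^4 + 16x^3 + 36x^2 + 18x + 46$ in $\mathbb{F}_{53}[x]$. Then $\#\{(x, y_1, y_2) \in \mathbb{F}_{53}^3 : y_1^2 = f_1(x) \text{ and } y_2^2 = f_2(x)\} = 116$. -/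
set_option maxRecDepth 100000 in
/-- Affine point count of the fibre product curve `y₁² = f₁(x)`, `y₂² = f₂(x)`. -/
theorem affine_point_count_12 :
    Nat.card {p : (ZMod 53) × (ZMod 53) × (ZMod 53) |
      p.2.1 ^ 2 = p.1^4 + p.1^3 + 52*p.1^2 + 47*p.1 + 1 ∧
      p.2.2 ^ 2 = p.1^4 + 16*p.1^3 + 36*p.1^2 + 18*p.1 + 46} = 116 := by
  have e : {p : (ZMod 53) × (ZMod 53) × (ZMod 53) |
      p.2.1 ^ 2 = p.1^4 + p.1^3 + 52*p.1^2 + 47*p.1 + 1 ∧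
      p.2.2 ^ 2 = p.1^4 + 16*p.1^3 + 36*p.1^2 + 18*p.1 + 46} ≃
      Σ x : ZMod 53, {y : ZMod 53 // y^2 = x^4 + x^3 + 52*x^2 + 47*x + 1} ×
        {y : ZMod 53 // y^2 = x^4 + 16*x^3 + 36*x^2 + 18*x + 46} :=
    { toFun := fun p => ⟨p.1.1, ⟨p.1.2.1, p.2.1⟩, ⟨p.1.2.2, p.2.2⟩⟩
      invFun := fun s => ⟨(s.1, s.2.1.1, s.2.2.1), s.2.1.2, s.2.2.2⟩
      left_inv := fun p => rfl
      right_inv := fun s => rfl }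
  rw [Nat.card_congr e, Nat.card_eq_fintype_card]
  decide
end

section
/- Let $\mathbb{F}_{41}$ be the field with $41$ elements, $f_1 = x^5 + 31x^4 + 11x^3 + 14x^2 + 35x + 40$ and $f_2 = x^3 + 23x^2 + 5x + 17$ in $\mathbb{F}_{41}[x]$. Then $\#\{(x, y_1, y_2) \in \mathbb{F}_{41}^3 : y_1^2 = f_1(x) \text{ and } y_2^2 = f_2(x)\} = 102$. -/
set_option maxRecDepth 100000
set_option maxHeartbeats 4000000

def f1 (x : ZMod 41) : ZMod 41 := x^5 + 31*x^4 + 11*x^3 + 14*x^2 + 35*x + 40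
def f2 (x : ZMod 41) : ZMod 41 := x^3 + 23*x^2 + 5*x + 17

def myEquiv :
    {p : (ZMod 41) × (ZMod 41) × (ZMod 41) //
      p.2.1 ^ 2 = f1 p.1 ∧ p.2.2 ^ 2 = f2 p.1} ≃
    Σ x : ZMod 41, {y : ZMod 41 // y ^ 2 = f1 x} × {y : ZMod 41 // y ^ 2 = f2 x} where
  toFun p := ⟨p.1.1, ⟨p.1.2.1, p.2.1⟩, ⟨p.1.2.2, p.2.2⟩⟩
  invFun q := ⟨⟨q.1, q.2.1.1, q.2.2.1⟩, q.2.1.2, q.2.2.2⟩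
  left_inv p := rfl
  right_inv q := rfl

lemma sumcount : ∑ x : ZMod 41,
    ((Finset.univ.filter fun y : ZMod 41 => y ^ 2 = f1 x).card *
     (Finset.univ.filter fun y : ZMod 41 => y ^ 2 = f2 x).card) = 102 := by
  decide

/-- Affine point count of the fibre product curve `y₁² = f₁(x)`, `y₂² = f₂(x)`. -/
theorem affine_point_count_17 :
    Nat.card {p : (ZMod 41) × (ZMod 41) × (ZMod 41) |
      p.2.1 ^ 2 = p.1^5 + 31*p.1^4 + 11*p.1^3 + 14*p.1^2 + 35*p.1 + 40 ∧
      p.2.2 ^ 2 = p.1^3 + 23*p.1^2 + 5*p.1 + 17} = 102 := by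
  have h := Nat.card_congr myEquiv
  rw [Nat.card_eq_fintype_card, Nat.card_eq_fintype_card, Fintype.card_sigma] at h
  simp only [Fintype.card_prod, Fintype.card_subtype] at h
  show Nat.card {p : (ZMod 41) × (ZMod 41) × (ZMod 41) //
      p.2.1 ^ 2 = f1 p.1 ∧ p.2.2 ^ 2 = f2 p.1} = 102
  rw [Nat.card_eq_fintype_card, Fintype.card_subtype, h, sumcount]
end
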